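/- Let A, B be bounded operators on a complex Hilbert space with A positive and B self-adjoint. If AB is hyponormal, then A + iB is normal. -/

import Mathlib

set_option maxHeartbeats 1000000
set_option synthInstance.maxHeartbeats 400000

open scoped InnerProductSpace ComplexConjugate

variable {H : Type*} [NormedAddCommGroup H] [InnerProductSpace ℂ H] [CompleteSpace H]

/-- From a pointwise squared bound, get a squared operator norm bound. -/
lemma opnorm_sq_le (S : H →L[ℂ] H) (C : ℝ) (hC : 0 ≤ C)
    (h : ∀ x, ‖S x‖ ^ 2 ≤ C * ‖x‖ ^ 2) : ‖S‖ ^ 2 ≤ C := by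
  have h1 : ‖S‖ ≤ Real.sqrt C := by
    refine S.opNorm_le_bound (Real.sqrt_nonneg C) (fun x => ?_)
    have := h x
    have h2 : ‖S x‖ ≤ Real.sqrt (C * ‖x‖ ^ 2) := by
      rw [← Real.sqrt_sq (norm_nonneg (S x))]
      exact Real.sqrt_le_sqrt this
    rwa [Real.sqrt_mul hC, Real.sqrt_sq (norm_nonneg x)] at h2
  calc ‖S‖ ^ 2 ≤ Real.sqrt C ^ 2 := by
        apply pow_le_pow_left₀ (norm_nonneg _) h1
    _ = C := Real.sq_sqrt hC

/-- Hyponormal operators are paranormal (pointwise). -/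
lemma paranormal (S : H →L[ℂ] H) (h : ∀ x, ‖(star S) x‖ ≤ ‖S x‖) (x : H) :
    ‖S x‖ ^ 2 ≤ ‖S (S x)‖ * ‖x‖ := by
  have h1 : (⟪S x, S x⟫_ℂ) = ⟪x, (star S) (S x)⟫_ℂ := by
    rw [ContinuousLinearMap.star_eq_adjoint, ContinuousLinearMap.adjoint_inner_right]
  have h2 : ‖S x‖ ^ 2 = ‖⟪x, (star S) (S x)⟫_ℂ‖ := by
    rw [← h1, inner_self_eq_norm_sq_to_K (𝕜 := ℂ)]
    simp [norm_pow]
  rw [h2]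
  calc ‖⟪x, (star S) (S x)⟫_ℂ‖ ≤ ‖x‖ * ‖(star S) (S x)‖ := norm_inner_le_norm _ _
    _ ≤ ‖x‖ * ‖S (S x)‖ := by gcongr; exact h (S x)
    _ = ‖S (S x)‖ * ‖x‖ := mul_comm _ _

lemma norm_pow_ge (S : H →L[ℂ] H) (h : ∀ x, ‖(star S) x‖ ≤ ‖S x‖) :
    ∀ n : ℕ, ‖S‖ ^ (n + 1) ≤ ‖S ^ (n + 1)‖ := by
  by_cases hS : ‖S‖ = 0
  · intro n; rw [hS]; simp [zero_pow, Nat.succ_ne_zero]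
  have hSpos : 0 < ‖S‖ := lt_of_le_of_ne (norm_nonneg _) (Ne.symm hS)
  have sq2 : ‖S‖ ^ 2 ≤ ‖S ^ 2‖ := by
    refine opnorm_sq_le S ‖S ^ 2‖ (norm_nonneg _) (fun x => ?_)
    calc ‖S x‖ ^ 2 ≤ ‖S (S x)‖ * ‖x‖ := paranormal S h x
      _ = ‖(S ^ 2) x‖ * ‖x‖ := by rw [pow_two, ContinuousLinearMap.mul_apply]
      _ ≤ (‖S ^ 2‖ * ‖x‖) * ‖x‖ := by gcongr; exact (S ^ 2).le_opNorm x
      _ = ‖S ^ 2‖ * ‖x‖ ^ 2 := by ring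
  have key : ∀ n : ℕ, ‖S‖ ^ (n + 1) ≤ ‖S ^ (n + 1)‖ ∧ ‖S‖ ^ (n + 2) ≤ ‖S ^ (n + 2)‖ := by
    intro n
    induction n with
    | zero => exact ⟨by simpa using le_refl ‖S‖, by simpa using sq2⟩
    | succ m ih =>
      obtain ⟨ih1, ih2⟩ := ih
      refine ⟨ih2, ?_⟩
      have step : ‖S ^ (m + 2)‖ ^ 2 ≤ ‖S ^ (m + 3)‖ * ‖S‖ ^ (m + 1) := by
        refine opnorm_sq_le _ _ (by positivity) (fun x => ?_)
        have e1 : (S ^ (m + 2)) x = S ((S ^ (m + 1)) x) := by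
          rw [pow_succ' S (m + 1), ContinuousLinearMap.mul_apply]
        have e2 : S (S ((S ^ (m + 1)) x)) = (S ^ (m + 3)) x := by
          have : S ^ (m + 3) = S * (S * S ^ (m + 1)) := by
            rw [← pow_succ' S (m + 1), ← pow_succ' S (m + 2)]
          rw [this]; simp [ContinuousLinearMap.mul_apply]
        calc ‖(S ^ (m + 2)) x‖ ^ 2 = ‖S ((S ^ (m + 1)) x)‖ ^ 2 := by rw [e1]
          _ ≤ ‖S (S ((S ^ (m + 1)) x))‖ * ‖(S ^ (m + 1)) x‖ := paranormal S h _
          _ = ‖(S ^ (m + 3)) x‖ * ‖(S ^ (m + 1)) x‖ := by rw [e2]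
          _ ≤ (‖S ^ (m + 3)‖ * ‖x‖) * (‖S ^ (m + 1)‖ * ‖x‖) := by
              gcongr <;> [exact (S ^ (m + 3)).le_opNorm x; exact (S ^ (m + 1)).le_opNorm x]
          _ ≤ (‖S ^ (m + 3)‖ * ‖x‖) * (‖S‖ ^ (m + 1) * ‖x‖) := by
              gcongr; exact norm_pow_le' S (Nat.succ_pos m)
          _ = (‖S ^ (m + 3)‖ * ‖S‖ ^ (m + 1)) * ‖x‖ ^ 2 := by ring
      have base : ‖S‖ ^ (2 * m + 4) ≤ ‖S ^ (m + 3)‖ * ‖S‖ ^ (m + 1) := by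
        calc ‖S‖ ^ (2 * m + 4) = (‖S‖ ^ (m + 2)) ^ 2 := by rw [← pow_mul]; ring_nf
          _ ≤ ‖S ^ (m + 2)‖ ^ 2 := pow_le_pow_left₀ (by positivity) ih2 2
          _ ≤ ‖S ^ (m + 3)‖ * ‖S‖ ^ (m + 1) := step
      have cancel : ‖S‖ ^ (m + 3) * ‖S‖ ^ (m + 1) ≤ ‖S ^ (m + 3)‖ * ‖S‖ ^ (m + 1) := by
        calc ‖S‖ ^ (m + 3) * ‖S‖ ^ (m + 1) = ‖S‖ ^ (2 * m + 4) := by rw [← pow_add]; ring_nf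
          _ ≤ _ := base
      exact le_of_mul_le_mul_right cancel (pow_pos hSpos (m + 1))
  exact fun n => (key n).1

lemma normaloid (S : H →L[ℂ] H) (h : ∀ x, ‖(star S) x‖ ≤ ‖S x‖) :
    spectralRadius ℂ S = (‖S‖₊ : ENNReal) := by
  have eq : ∀ n : ℕ, ‖S ^ (n + 1)‖ = ‖S‖ ^ (n + 1) := fun n =>
    le_antisymm (norm_pow_le' S (Nat.succ_pos n)) (norm_pow_ge S h n)
  have gel := spectrum.pow_nnnorm_pow_one_div_tendsto_nhds_spectralRadius S
  have heq : ∀ᶠ n : ℕ in Filter.atTop,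
      ((‖S ^ n‖₊ : ENNReal) ^ (1 / n : ℝ)) = (‖S‖₊ : ENNReal) := by
    filter_upwards [Filter.eventually_ge_atTop 1] with n hn
    obtain ⟨m, rfl⟩ := Nat.exists_eq_add_of_le hn
    have hnn : ‖S ^ (1 + m)‖₊ = ‖S‖₊ ^ (1 + m) := by
      ext; push_cast
      simpa [add_comm 1 m] using eq m
    rw [hnn, ENNReal.coe_pow, ← ENNReal.rpow_natCast, ← ENNReal.rpow_mul]
    have hne : ((1 + m : ℕ) : ℝ) ≠ 0 := by positivity
    rw [mul_one_div, div_self hne, ENNReal.rpow_one]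
  have hconst := (Filter.tendsto_congr' heq).mp gel
  exact tendsto_nhds_unique hconst tendsto_const_nhds

/-- Hyponormality is preserved under adding scalars. -/
lemma hypo_shift (T : H →L[ℂ] H) (h : ∀ x, ‖(star T) x‖ ≤ ‖T x‖) (c : ℂ) :
    ∀ x, ‖(star (T + c • 1)) x‖ ≤ ‖(T + c • 1) x‖ := by
  intro x
  have hstar : star (T + c • 1) = star T + (starRingEnd ℂ c) • 1 := by
    simp [star_smul, RCLike.star_def]
  have hsq : ‖(star (T + c • 1)) x‖ ^ 2 ≤ ‖(T + c • 1) x‖ ^ 2 := by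
    have e1 : (T + c • 1) x = T x + c • x := by simp
    have e2 : (star (T + c • 1)) x = (star T) x + (starRingEnd ℂ c) • x := by
      rw [hstar]; simp
    rw [e1, e2, norm_add_sq (𝕜 := ℂ), norm_add_sq (𝕜 := ℂ)]
    have i1 : RCLike.re ⟪T x, c • x⟫_ℂ = (c * ⟪T x, x⟫_ℂ).re := by
      rw [inner_smul_right]; simp
    have i2 : RCLike.re ⟪(star T) x, (starRingEnd ℂ c) • x⟫_ℂ = (c * ⟪T x, x⟫_ℂ).re := by
      rw [inner_smul_right]
      have : ⟪(star T) x, x⟫_ℂ = starRingEnd ℂ ⟪T x, x⟫_ℂ := by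
        rw [ContinuousLinearMap.star_eq_adjoint, ContinuousLinearMap.adjoint_inner_left,
          ← inner_conj_symm]
      rw [this, ← map_mul, RCLike.conj_re]
      simp
    have i3 : ‖(starRingEnd ℂ c) • x‖ = ‖c • x‖ := by
      rw [norm_smul, norm_smul]; simp
    rw [i1, i2, i3]
    have := h x
    nlinarith [norm_nonneg ((star T) x), norm_nonneg (T x)]
  nlinarith [norm_nonneg ((star (T + c • 1)) x), norm_nonneg ((T + c • 1) x)]

/-- The spectrum of `A * B` is real. -/
lemma spectrum_real (A B : H →L[ℂ] H) (hA : A.IsPositive) (hB : IsSelfAdjoint B) :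
    ∀ z ∈ spectrum ℂ (A * B), z.im = 0 := by
  intro z hz
  by_cases hz0 : z = 0
  · simp [hz0]
  set C := CFC.sqrt A with hCdef
  have hA' : 0 ≤ A := (ContinuousLinearMap.nonneg_iff_isPositive A).mpr hA
  have hCC : C * C = A := CFC.sqrt_mul_sqrt_self A hA'
  have hCsa : IsSelfAdjoint C :=
    ((ContinuousLinearMap.nonneg_iff_isPositive C).mp (CFC.sqrt_nonneg A)).isSelfAdjoint
  have h1 : z ∈ spectrum ℂ (C * (C * B)) := by rwa [← mul_assoc, hCC]
  have h2 : z ∈ spectrum ℂ ((C * B) * C) := by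
    have := spectrum.nonzero_mul_comm (𝕜 := ℂ) C (C * B)
    have hmem : z ∈ spectrum ℂ (C * (C * B)) \ {0} := ⟨h1, hz0⟩
    rw [this] at hmem
    exact hmem.1
  have hsa : IsSelfAdjoint ((C * B) * C) := by
    rw [IsSelfAdjoint, star_mul, star_mul, hCsa.star_eq, hB.star_eq, mul_assoc]
  exact hsa.im_eq_zero_of_mem_spectrum h2

lemma T_selfadjoint [Nontrivial H] (T : H →L[ℂ] H) (h : ∀ x, ‖(star T) x‖ ≤ ‖T x‖)
    (hspec : ∀ z ∈ spectrum ℂ T, z.im = 0) : IsSelfAdjoint T := by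
  -- operator norm bound for shifted operator
  have norm_shift : ∀ s : ℝ, ‖T + ((s : ℂ) * Complex.I) • 1‖ ^ 2 ≤ ‖T‖ ^ 2 + s ^ 2 := by
    intro s
    set c : ℂ := (s : ℂ) * Complex.I with hc
    set S := T + c • 1 with hSdef
    have hrad : spectralRadius ℂ S = (‖S‖₊ : ENNReal) := normaloid S (hypo_shift T h c)
    set K : ℝ := Real.sqrt (‖T‖ ^ 2 + s ^ 2) with hK
    have hK0 : 0 ≤ K := Real.sqrt_nonneg _
    have hzbound : ∀ z ∈ spectrum ℂ S, ‖z‖ ≤ K := by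
      intro z hz
      have hw : z - c ∈ spectrum ℂ T := by
        rw [spectrum.mem_iff] at hz ⊢
        have e : algebraMap ℂ (H →L[ℂ] H) z - S = algebraMap ℂ (H →L[ℂ] H) (z - c) - T := by
          rw [hSdef, Algebra.algebraMap_eq_smul_one, Algebra.algebraMap_eq_smul_one, sub_smul]
          abel
        rwa [e] at hz
      have hwim : (z - c).im = 0 := hspec _ hw
      have hwnorm : ‖z - c‖ ≤ ‖T‖ := spectrum.norm_le_norm_of_mem hw
      have hzim : z.im = s := by
        have : z.im - s = 0 := by simpa [hc] using hwim
        linarith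
      have hzre : (z - c).re = z.re := by simp [hc]
      have h2 : z.re ^ 2 ≤ ‖T‖ ^ 2 := by
        have h3 : |(z - c).re| ≤ ‖z - c‖ := Complex.abs_re_le_norm (z - c)
        rw [hzre] at h3
        nlinarith [norm_nonneg (z - c), abs_nonneg z.re, le_abs_self z.re, neg_abs_le z.re]
      have h1 : ‖z‖ ^ 2 = z.re ^ 2 + s ^ 2 := by
        rw [Complex.sq_norm, Complex.normSq_apply, hzim]; ring
      rw [← Real.sqrt_sq (norm_nonneg z), hK]
      apply Real.sqrt_le_sqrt
      rw [h1]; linarith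
    have hle : (‖S‖₊ : ENNReal) ≤ ((K.toNNReal : ENNReal)) := by
      rw [← hrad, spectralRadius]
      refine iSup₂_le fun z hz => ?_
      rw [ENNReal.coe_le_coe]
      have := hzbound z hz
      rw [← NNReal.coe_le_coe]
      simpa [Real.coe_toNNReal _ hK0] using this
    have : ‖S‖ ≤ K := by
      rw [ENNReal.coe_le_coe, ← NNReal.coe_le_coe] at hle
      simpa [Real.coe_toNNReal _ hK0] using hle
    calc ‖S‖ ^ 2 ≤ K ^ 2 := pow_le_pow_left₀ (norm_nonneg _) this 2
      _ = ‖T‖ ^ 2 + s ^ 2 := Real.sq_sqrt (by positivity)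
  -- imaginary part of the quadratic form vanishes
  have him : ∀ x : H, (⟪T x, x⟫_ℂ).im = 0 := by
    intro x
    by_cases hx : x = 0
    · simp [hx]
    have hn : 0 < ‖x‖ := norm_pos_iff.mpr hx
    set n := ‖x‖ with hndef
    set p := ⟪T x, x⟫_ℂ with hp
    clear_value n p
    by_contra hne
    have key : ∀ s : ℝ, (p.im - s * n ^ 2) ^ 2 ≤ (‖T‖ ^ 2 + s ^ 2) * n ^ 4 := by
      intro s
      set c : ℂ := (s : ℂ) * Complex.I with hc
      set S := T + c • 1 with hSdef
      have hinner : ⟪S x, x⟫_ℂ = p + (starRingEnd ℂ c) * (‖x‖ : ℂ) ^ 2 := by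
        rw [hSdef]
        simp only [ContinuousLinearMap.add_apply, inner_add_left,
          ContinuousLinearMap.smul_apply, ContinuousLinearMap.one_apply, inner_smul_left]
        rw [inner_self_eq_norm_sq_to_K (𝕜 := ℂ), hp]
        rfl
      have habs : ‖⟪S x, x⟫_ℂ‖ ≤ ‖S‖ * n ^ 2 := by
        calc ‖⟪S x, x⟫_ℂ‖ ≤ ‖S x‖ * ‖x‖ := norm_inner_le_norm _ _
          _ ≤ (‖S‖ * ‖x‖) * ‖x‖ := by gcongr; exact S.le_opNorm x
          _ = ‖S‖ * n ^ 2 := by rw [← hndef]; ring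
      have hsq : ‖⟪S x, x⟫_ℂ‖ ^ 2 ≤ (‖T‖ ^ 2 + s ^ 2) * n ^ 4 := by
        have h2 := norm_shift s
        calc ‖⟪S x, x⟫_ℂ‖ ^ 2 ≤ (‖S‖ * n ^ 2) ^ 2 :=
              pow_le_pow_left₀ (norm_nonneg _) habs 2
          _ = ‖S‖ ^ 2 * n ^ 4 := by ring
          _ ≤ (‖T‖ ^ 2 + s ^ 2) * n ^ 4 := by gcongr
      have him2 : (⟪S x, x⟫_ℂ).im = p.im - s * n ^ 2 := by
        rw [hndef, hinner, hc]
        simp [Complex.add_im, Complex.mul_im]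
        norm_cast
      have : (⟪S x, x⟫_ℂ).im ^ 2 ≤ ‖⟪S x, x⟫_ℂ‖ ^ 2 := by
        have h6 := Complex.abs_im_le_norm (⟪S x, x⟫_ℂ)
        calc (⟪S x, x⟫_ℂ).im ^ 2 = |(⟪S x, x⟫_ℂ).im| ^ 2 := (sq_abs _).symm
          _ ≤ ‖⟪S x, x⟫_ℂ‖ ^ 2 := pow_le_pow_left₀ (abs_nonneg _) h6 2
      rw [him2] at this
      linarith
    -- choose s to contradict
    have hkey := key (-(‖T‖ ^ 2 * n ^ 4 + 1) / (2 * n ^ 2 * p.im))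
    set s := -(‖T‖ ^ 2 * n ^ 4 + 1) / (2 * n ^ 2 * p.im) with hs
    have hne2 : 2 * n ^ 2 * p.im ≠ 0 := mul_ne_zero (by positivity) hne
    have hcancel : s * (2 * n ^ 2 * p.im) = -(‖T‖ ^ 2 * n ^ 4 + 1) := by
      rw [hs, div_mul_cancel₀ _ hne2]
    have hexp : p.im ^ 2 - s * (2 * n ^ 2 * p.im) + (s * n ^ 2) ^ 2
        ≤ ‖T‖ ^ 2 * n ^ 4 + s ^ 2 * n ^ 4 := by nlinarith [hkey]
    rw [hcancel] at hexp
    nlinarith [sq_nonneg p.im, sq_nonneg (s * n ^ 2)]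
  -- conclude self-adjointness
  have : ∀ x : H, ⟪(T - star T) x, x⟫_ℂ = 0 := by
    intro x
    simp only [ContinuousLinearMap.sub_apply, inner_sub_left]
    have : ⟪(star T) x, x⟫_ℂ = starRingEnd ℂ ⟪T x, x⟫_ℂ := by
      rw [ContinuousLinearMap.star_eq_adjoint, ContinuousLinearMap.adjoint_inner_left,
        ← inner_conj_symm]
    rw [this]
    have h5 := him x
    apply Complex.ext <;>
      simp only [Complex.sub_re, Complex.sub_im, Complex.conj_re, Complex.conj_im,
        Complex.zero_re, Complex.zero_im, h5] <;> ring
  have hzero : T - star T = 0 := by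
    have hlin := (inner_map_self_eq_zero ((T - star T : H →L[ℂ] H) : H →ₗ[ℂ] H)).mp (by
      intro x; simpa [inner_sub_left] using this x)
    ext x
    have := congrFun (congrArg DFunLike.coe hlin) x
    simpa using this
  rw [IsSelfAdjoint]
  have := sub_eq_zero.mp hzero
  exact this.symm

theorem stmt_7 (A B : H →L[ℂ] H) (hA : A.IsPositive) (hB : IsSelfAdjoint B)
    (hhyp : ∀ x : H, ‖(ContinuousLinearMap.adjoint (A * B)) x‖ ≤ ‖(A * B) x‖) :
    IsStarNormal (A + Complex.I • B) := by
  rcases subsingleton_or_nontrivial H with hsub | hnt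
  · have : Subsingleton (H →L[ℂ] H) := ⟨fun f g => by ext x; exact Subsingleton.elim _ _⟩
    exact ⟨Subsingleton.elim _ _⟩
  · have hT : ∀ x, ‖(star (A * B)) x‖ ≤ ‖(A * B) x‖ := by
      intro x; rw [ContinuousLinearMap.star_eq_adjoint]; exact hhyp x
    have hsa : IsSelfAdjoint (A * B) := T_selfadjoint (A * B) hT (spectrum_real A B hA hB)
    have hcomm : A * B = B * A := by
      conv_lhs => rw [← hsa.star_eq]
      rw [star_mul, hA.isSelfAdjoint.star_eq, hB.star_eq]
    constructor
    have hstar : star (A + Complex.I • B) = A - Complex.I • B := by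
      rw [star_add, star_smul, hA.isSelfAdjoint.star_eq, hB.star_eq]
      simp [Complex.star_def, Complex.conj_I, neg_smul, sub_eq_add_neg]
    rw [Commute, SemiconjBy, hstar]
    simp only [mul_add, add_mul, mul_sub, sub_mul, smul_mul_assoc, mul_smul_comm, smul_smul,
      smul_add, smul_sub]
    rw [hcomm]
    module
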